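/- Let G be a simple graph on n vertices with splittance σ(G). If 1 ≤ k ≤ σ(G)/√(8n), then BC_k(G) holds. In particular, if σ(G) ≥ √2 · n^{3/2}, then BC_k(G) holds for every k with 1 ≤ k ≤ n. -/

import Mathlib

open Finset

namespace Brouwer

variable {V : Type*}

/-- The sum of the `k` largest values of `f` on a finite type, expressed as the
supremum over all `k`-element subsets of the sum of `f` over the subset. -/
noncomputable def sumKLargest [Fintype V] (f : V → ℝ) (k : ℕ) : ℝ :=
  sSup { x : ℝ | ∃ T : Finset V, T.card = k ∧ ∑ i ∈ T, f i = x }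

/-- The Laplacian matrix of a finite simple graph is Hermitian (real symmetric). -/
theorem lapMatrix_isHermitian [Fintype V] [DecidableEq V] (G : SimpleGraph V)
    [DecidableRel G.Adj] : (G.lapMatrix ℝ).IsHermitian := by
  rw [Matrix.IsHermitian, Matrix.conjTranspose_eq_transpose_of_trivial]
  exact G.isSymm_lapMatrix (R := ℝ)

/-- The adjacency matrix of a finite simple graph is Hermitian (real symmetric). -/
theorem adjMatrix_isHermitian [Fintype V] [DecidableEq V] (G : SimpleGraph V)
    [DecidableRel G.Adj] : (G.adjMatrix ℝ).IsHermitian := by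
  rw [Matrix.IsHermitian, Matrix.conjTranspose_eq_transpose_of_trivial]
  exact G.isSymm_adjMatrix

/-- The (multiset of) eigenvalues of the Laplacian matrix of `G`, indexed by vertices. -/
noncomputable def lapEig [Fintype V] [DecidableEq V] (G : SimpleGraph V) : V → ℝ := by
  classical exact (lapMatrix_isHermitian G).eigenvalues

/-- The (multiset of) eigenvalues of the adjacency matrix of `G`, indexed by vertices. -/
noncomputable def adjEig [Fintype V] [DecidableEq V] (G : SimpleGraph V) : V → ℝ := by
  classical exact (adjMatrix_isHermitian G).eigenvalues

/-- `sLap G k` is `s_k(G)`, the sum of the `k` largest Laplacian eigenvalues of `G`. -/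
noncomputable def sLap [Fintype V] [DecidableEq V] (G : SimpleGraph V) (k : ℕ) : ℝ :=
  sumKLargest (lapEig G) k

/-- The number of edges of `G`. -/
noncomputable def numEdges [Fintype V] (G : SimpleGraph V) : ℕ := by
  classical exact G.edgeFinset.card

/-- `BC G k`: Brouwer's conjectured inequality `s_k(G) ≤ m + (k+1 choose 2)`. -/
def BC [Fintype V] [DecidableEq V] (G : SimpleGraph V) (k : ℕ) : Prop :=
  sLap G k ≤ numEdges G + (k + 1).choose 2

/-- Number of edges of `G` with both endpoints in `S`. -/
noncomputable def edgesWithin [Fintype V] [DecidableEq V] (G : SimpleGraph V)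
    (S : Finset V) : ℕ := by
  classical exact (G.edgeFinset.filter (fun e => ∀ v ∈ e, v ∈ S)).card

/-- The adjacency spectral radius of `G`, i.e. the largest adjacency eigenvalue. -/
noncomputable def specRad [Fintype V] [DecidableEq V] (G : SimpleGraph V) : ℝ :=
  sumKLargest (adjEig G) 1

/-- The maximum subgraph spectral density `t(G)`:
the supremum of `ρ(G[S])/|S|` over nonempty vertex subsets `S`. -/
noncomputable def maxDensity [Fintype V] [DecidableEq V] (G : SimpleGraph V) : ℝ :=
  sSup { x : ℝ | ∃ S : Finset V, S.Nonempty ∧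
    x = specRad (G.induce (↑S : Set V)) / (S.card : ℝ) }

/-- Edge-edit distance between two graphs on the same vertex set. -/
noncomputable def editDistance [Fintype V] (G H : SimpleGraph V) : ℕ := by
  classical exact (symmDiff G.edgeFinset H.edgeFinset).card

/-- A split graph: the vertex set partitions into a clique and an independent set. -/
def IsSplit (G : SimpleGraph V) : Prop :=
  ∃ C : Set V, G.IsClique C ∧ Gᶜ.IsClique Cᶜ

/-- The splittance of `G`: the least number of edge edits needed to reach a split graph. -/
noncomputable def splittance [Fintype V] (G : SimpleGraph V) : ℕ :=
  sInf { d : ℕ | ∃ H : SimpleGraph V, IsSplit H ∧ editDistance G H = d }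

/-- The join `G + K₁` of `G` with one new vertex adjacent to every vertex of `G`. -/
def joinOne (G : SimpleGraph V) : SimpleGraph (Option V) where
  Adj x y := x ≠ y ∧ ∀ a, x = some a → ∀ b, y = some b → G.Adj a b
  symm := by
    constructor
    rintro x y ⟨hxy, h⟩
    exact ⟨hxy.symm, fun a ha b hb => (h b hb a ha).symm⟩
  loopless := by constructor; rintro x ⟨hxx, -⟩; exact hxx rfl


section AuxProofs

variable {V : Type*} [Fintype V] [DecidableEq V]

set_option linter.unusedSectionVars false

lemma lapEig_eq (G : SimpleGraph V) [inst : DecidableRel G.Adj] :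
    lapEig G = (lapMatrix_isHermitian G).eigenvalues := by
  unfold lapEig; congr!

lemma numEdges_eq (G : SimpleGraph V) [Fintype G.edgeSet] :
    numEdges G = G.edgeFinset.card := by
  unfold numEdges; congr!

lemma editDistance_eq (G H : SimpleGraph V) [Fintype G.edgeSet] [Fintype H.edgeSet] :
    editDistance G H = (symmDiff G.edgeFinset H.edgeFinset).card := by
  unfold editDistance; congr!

lemma exists_topk (d : V → ℝ) {k : ℕ} (hk : k ≤ Fintype.card V) :
    ∃ S : Finset V, S.card = k ∧ ∀ u ∈ S, ∀ v, v ∉ S → d v ≤ d u := by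
  obtain ⟨S, hS, hmax⟩ := Finset.exists_max_image (Finset.univ.powersetCard k)
    (fun s => ∑ u ∈ s, d u) (by rw [Finset.powersetCard_nonempty]; simpa using hk)
  rw [Finset.mem_powersetCard] at hS
  refine ⟨S, hS.2, ?_⟩
  intro u hu v hv
  by_contra hlt
  push_neg at hlt
  have hvS : v ∉ S.erase u := fun h => hv (Finset.mem_of_mem_erase h)
  have hmem : insert v (S.erase u) ∈ Finset.univ.powersetCard k := by
    rw [Finset.mem_powersetCard]
    refine ⟨Finset.subset_univ _, ?_⟩
    rw [Finset.card_insert_of_notMem hvS, Finset.card_erase_of_mem hu, hS.2]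
    have : 1 ≤ k := hS.2 ▸ Finset.card_pos.2 ⟨u, hu⟩
    omega
  have h2 := hmax _ hmem
  rw [Finset.sum_insert hvS] at h2
  have h3 : ∑ x ∈ S.erase u, d x + d u = ∑ x ∈ S, d x := Finset.sum_erase_add _ _ hu
  linarith

lemma sum_mul_le_topk {d x : V → ℝ} {S : Finset V} (hS : S.Nonempty)
    (hx0 : ∀ u, 0 ≤ x u) (hx1 : ∀ u, x u ≤ 1)
    (hsum : ∑ u, x u = S.card) (hmax : ∀ u ∈ S, ∀ v, v ∉ S → d v ≤ d u) :
    ∑ u, d u * x u ≤ ∑ u ∈ S, d u := by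
  obtain ⟨u₀, hu₀, hmin⟩ := S.exists_min_image d hS
  have h1 : ∑ u ∈ S, d u * x u + ∑ u ∈ Sᶜ, d u * x u = ∑ u, d u * x u :=
    Finset.sum_add_sum_compl S _
  have h2 : ∑ u ∈ Sᶜ, d u * x u ≤ ∑ u ∈ Sᶜ, d u₀ * x u := by
    refine Finset.sum_le_sum fun v hv => ?_
    exact mul_le_mul_of_nonneg_right (hmax u₀ hu₀ v (by simpa using hv)) (hx0 v)
  have h3 : ∑ u ∈ Sᶜ, d u₀ * x u = d u₀ * (∑ u, x u - ∑ u ∈ S, x u) := by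
    rw [← Finset.mul_sum]
    congr 1
    have := Finset.sum_add_sum_compl S x
    linarith
  have h4 : d u₀ * (∑ u, x u - ∑ u ∈ S, x u) = ∑ u ∈ S, d u₀ * (1 - x u) := by
    have hc : (S.card : ℝ) = ∑ u ∈ S, (1:ℝ) := by simp
    rw [hsum, hc, ← Finset.sum_sub_distrib, Finset.mul_sum]
  have h5 : ∑ u ∈ S, d u₀ * (1 - x u) ≤ ∑ u ∈ S, d u * (1 - x u) := by
    refine Finset.sum_le_sum fun v hv => ?_
    exact mul_le_mul_of_nonneg_right (hmin v hv) (by linarith [hx1 v])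
  have h6 : ∑ u ∈ S, d u * x u + ∑ u ∈ S, d u * (1 - x u) = ∑ u ∈ S, d u := by
    rw [← Finset.sum_add_distrib]
    exact Finset.sum_congr rfl fun u _ => by ring
  linarith

lemma splittance_bound (G : SimpleGraph V) [DecidableRel G.Adj] (S : Finset V) :
    splittance G + ∑ u ∈ S, G.degree u ≤ S.card.choose 2 + numEdges G := by
  classical
  set r : V → V → Prop := fun x y => (x ∈ S ∧ y ∈ S) ∨ (G.Adj x y ∧ (x ∈ S ∨ y ∈ S))
    with hr
  set H : SimpleGraph V := SimpleGraph.fromRel r with hH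
  have hHadj : ∀ x y, H.Adj x y ↔ x ≠ y ∧ ((x ∈ S ∧ y ∈ S) ∨ (G.Adj x y ∧ (x ∈ S ∨ y ∈ S))) := by
    intro x y
    rw [hH, SimpleGraph.fromRel_adj, hr]
    have hc := G.adj_comm x y
    tauto
  have hsplit : IsSplit H := by
    refine ⟨(S : Set V), ?_, ?_⟩
    · intro x hx y hy hxy
      exact (hHadj x y).2 ⟨hxy, Or.inl ⟨hx, hy⟩⟩
    · intro x hx y hy hxy
      rw [SimpleGraph.compl_adj]
      refine ⟨hxy, fun hadj => ?_⟩
      rcases (hHadj x y).1 hadj with ⟨-, ⟨h1, -⟩ | ⟨-, h2⟩⟩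
      · exact hx h1
      · rcases h2 with h | h
        · exact hx h
        · exact hy h
  -- finsets
  set E := G.edgeFinset with hE
  set EH := H.edgeFinset with hEH
  set X := E.filter (fun e => ∃ v ∈ e, v ∈ S) with hX
  set W := E.filter (fun e => ∀ v ∈ e, v ∈ S) with hW
  set Q := S.sym2.filter (fun e => ¬ e.IsDiag) with hQ
  -- splittance ≤ edit distance
  have hsp : splittance G ≤ (E \ EH).card + (EH \ E).card := by
    have h1 : splittance G ≤ editDistance G H := Nat.sInf_le ⟨H, hsplit, rfl⟩
    have h2 : editDistance G H = (symmDiff E EH).card := editDistance_eq G H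
    rw [h2, symmDiff_def, Finset.sup_eq_union,
      Finset.card_union_of_disjoint disjoint_sdiff_sdiff] at h1
    exact h1
  -- E \ EH : edges outside S
  have hEsd : E \ EH = E.filter (fun e => ¬ ∃ v ∈ e, v ∈ S) := by
    ext e
    induction e with
    | _ a b =>
      simp only [hE, hEH, Finset.mem_sdiff, Finset.mem_filter, SimpleGraph.mem_edgeFinset,
        SimpleGraph.mem_edgeSet, hHadj, Sym2.mem_iff]
      constructor
      · rintro ⟨hab, hn⟩
        refine ⟨hab, ?_⟩
        rintro ⟨v, hv | hv, hvS⟩ <;> subst hv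
        · exact hn ⟨G.ne_of_adj hab, Or.inr ⟨hab, Or.inl hvS⟩⟩
        · exact hn ⟨G.ne_of_adj hab, Or.inr ⟨hab, Or.inr hvS⟩⟩
      · rintro ⟨hab, hn⟩
        refine ⟨hab, ?_⟩
        rintro ⟨-, ⟨h1, h2⟩ | ⟨-, h1 | h1⟩⟩
        · exact hn ⟨a, Or.inl rfl, h1⟩
        · exact hn ⟨a, Or.inl rfl, h1⟩
        · exact hn ⟨b, Or.inr rfl, h1⟩
  -- (EH \ E) ∪ W ⊆ Q, disjoint
  have hsub : (EH \ E) ∪ W ⊆ Q := by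
    intro e he
    induction e with
    | _ a b =>
      rcases Finset.mem_union.1 he with he | he
      · rw [Finset.mem_sdiff] at he
        obtain ⟨heH, heG⟩ := he
        rw [hEH, SimpleGraph.mem_edgeFinset, SimpleGraph.mem_edgeSet] at heH
        rw [hE, SimpleGraph.mem_edgeFinset, SimpleGraph.mem_edgeSet] at heG
        rcases (hHadj a b).1 heH with ⟨hne, ⟨h1, h2⟩ | ⟨h1, -⟩⟩
        · rw [hQ, Finset.mem_filter, Finset.mk_mem_sym2_iff]
          exact ⟨⟨h1, h2⟩, by simpa [Sym2.isDiag_iff_proj_eq] using hne⟩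
        · exact absurd h1 heG
      · rw [hW, Finset.mem_filter] at he
        obtain ⟨heG, hall⟩ := he
        rw [hQ, Finset.mem_filter, Finset.mk_mem_sym2_iff]
        refine ⟨⟨hall a (by simp), hall b (by simp)⟩, ?_⟩
        have := G.not_isDiag_of_mem_edgeFinset heG
        exact this
  have hdisj : Disjoint (EH \ E) W := by
    rw [Finset.disjoint_left]
    intro e he hw
    exact (Finset.mem_sdiff.1 he).2 (Finset.mem_of_mem_filter e hw)
  have hQcard : Q.card = S.card.choose 2 := by
    have h1 : (S.sym2.filter (fun e => e.IsDiag)).card + Q.card = S.sym2.card := by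
      rw [hQ]; exact Finset.card_filter_add_card_filter_not _
    have h2 : S.sym2.filter (fun e => e.IsDiag) = S.image Sym2.diag := by
      ext e
      induction e with
      | _ a b =>
        simp only [Finset.mem_filter, Finset.mk_mem_sym2_iff, Finset.mem_image,
          Sym2.isDiag_iff_proj_eq]
        constructor
        · rintro ⟨⟨ha, hb⟩, hab⟩
          subst hab
          exact ⟨a, ha, rfl⟩
        · rintro ⟨c, hc, hce⟩
          have hd : Sym2.diag c = s(c, c) := rfl
          rw [hd] at hce
          rcases Sym2.eq_iff.1 hce with ⟨h1, h2⟩ | ⟨h1, h2⟩ <;> simp_all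
    have h3 : (S.image Sym2.diag).card = S.card :=
      Finset.card_image_of_injective _ Sym2.diag_injective
    have h4 : S.sym2.card = (S.card + 1).choose 2 := Finset.card_sym2 S
    have h5 : (S.card + 1).choose 2 = S.card.choose 2 + S.card := by
      rw [Nat.choose_succ_succ, Nat.choose_one_right, Nat.add_comm]
    rw [h2, h3] at h1
    omega
  -- degree double counting
  have hdeg : ∑ u ∈ S, G.degree u ≤ X.card + W.card := by
    have hd1 : ∀ u, G.degree u = ∑ e ∈ E, if u ∈ e then 1 else 0 := by
      intro u
      rw [← SimpleGraph.card_incidenceFinset_eq_degree, SimpleGraph.incidenceFinset_eq_filter,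
        Finset.card_filter]
    have hswap : ∑ u ∈ S, G.degree u = ∑ e ∈ E, (S.filter (fun u => u ∈ e)).card := by
      simp_rw [hd1]
      rw [Finset.sum_comm]
      exact Finset.sum_congr rfl fun e _ => (Finset.card_filter _ _).symm
    have hXc : X.card = ∑ e ∈ E, if (∃ v ∈ e, v ∈ S) then 1 else 0 := Finset.card_filter _ _
    have hWc : W.card = ∑ e ∈ E, if (∀ v ∈ e, v ∈ S) then 1 else 0 := Finset.card_filter _ _
    rw [hswap, hXc, hWc, ← Finset.sum_add_distrib]
    refine Finset.sum_le_sum fun e he => ?_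
    induction e with
    | _ a b =>
      have hab : a ≠ b := by
        have := G.not_isDiag_of_mem_edgeFinset (hE ▸ he)
        simpa [Sym2.isDiag_iff_proj_eq] using this
      have hfil : S.filter (fun u => u ∈ s(a, b)) = S.filter (fun u => u = a ∨ u = b) := by
        apply Finset.filter_congr
        intro u _
        simp [Sym2.mem_iff]
      rw [hfil, Finset.filter_or, Finset.filter_eq', Finset.filter_eq']
      by_cases ha : a ∈ S <;> by_cases hb : b ∈ S <;>
        simp [ha, hb, hab, Sym2.mem_iff]
  -- assemble
  have hcard1 : (EH \ E).card + W.card ≤ Q.card := by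
    rw [← Finset.card_union_of_disjoint hdisj]
    exact Finset.card_le_card hsub
  have hcard2 : (E \ EH).card + X.card = E.card := by
    rw [hEsd, hX]
    have := Finset.card_filter_add_card_filter_not
      (s := E) (p := fun e => ∃ v ∈ e, v ∈ S)
    omega
  have hE' : E.card = numEdges G := (numEdges_eq G).symm
  omega

lemma spec_core (G : SimpleGraph V) [DecidableRel G.Adj] (T : Finset V) :
    ∃ x : V → ℝ, (∀ u, 0 ≤ x u) ∧ (∀ u, x u ≤ 1) ∧ (∑ u, x u = T.card) ∧
      ∑ i ∈ T, lapEig G i ≤ ∑ u, (G.degree u : ℝ) * x u +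
        Real.sqrt (2 * numEdges G * T.card) := by
  classical
  have hL := lapMatrix_isHermitian G
  set B := hL.eigenvectorBasis with hB
  set a : V → V → ℝ := fun i u => B i u with ha
  -- orthonormality
  have horth : ∀ i j, ∑ u, a i u * a j u = if i = j then 1 else 0 := by
    intro i j
    have h0 := B.orthonormal
    rw [orthonormal_iff_ite] at h0
    have h2 := h0 i j
    rw [PiLp.inner_apply] at h2
    simpa [RCLike.inner_apply, starRingEnd_apply, ha, mul_comm] using h2
  -- eigen equation
  have heig : ∀ i u, (G.degree u : ℝ) * a i u - ∑ v ∈ G.neighborFinset u, a i v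
      = hL.eigenvalues i * a i u := by
    intro i u
    have h1 := congrFun (hL.mulVec_eigenvectorBasis i) u
    rw [G.lapMatrix_mulVec_apply] at h1
    simpa [ha] using h1
  -- eigenvalue as quadratic form
  have hval : ∀ i, hL.eigenvalues i
      = ∑ u, (G.degree u : ℝ) * (a i u)^2
        - ∑ u, ∑ v, (if G.Adj u v then (1:ℝ) else 0) * (a i u * a i v) := by
    intro i
    have h1 : ∑ u, a i u * (hL.eigenvalues i * a i u) = hL.eigenvalues i := by
      have : ∑ u, a i u * (hL.eigenvalues i * a i u)
          = hL.eigenvalues i * ∑ u, a i u * a i u := by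
        rw [Finset.mul_sum]; exact Finset.sum_congr rfl fun u _ => by ring
      rw [this, horth i i]; simp
    rw [← h1]
    have h2 : ∀ u, a i u * (hL.eigenvalues i * a i u)
        = (G.degree u : ℝ) * (a i u)^2 - ∑ v, (if G.Adj u v then (1:ℝ) else 0) * (a i u * a i v) := by
      intro u
      rw [← heig i u]
      have h3 : ∑ v ∈ G.neighborFinset u, a i v = ∑ v, (if G.Adj u v then (1:ℝ) else 0) * a i v := by
        rw [SimpleGraph.neighborFinset_eq_filter, Finset.sum_filter]
        exact Finset.sum_congr rfl fun v _ => by split <;> ring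
      have h4 : ∑ v, (if G.Adj u v then (1:ℝ) else 0) * (a i u * a i v)
          = a i u * ∑ v, (if G.Adj u v then (1:ℝ) else 0) * a i v := by
        rw [Finset.mul_sum]; exact Finset.sum_congr rfl fun v _ => by ring
      rw [h4, ← h3]; ring
    rw [Finset.sum_congr rfl fun u _ => h2 u, Finset.sum_sub_distrib]
  -- define x and c
  set x : V → ℝ := fun u => ∑ i ∈ T, (a i u)^2 with hx
  set c : V → V → ℝ := fun u v => ∑ i ∈ T, a i u * a i v with hc
  have hx0 : ∀ u, 0 ≤ x u := fun u => Finset.sum_nonneg fun i _ => sq_nonneg _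
  have hx1 : ∀ u, x u ≤ 1 := by
    intro u
    have hb := B.orthonormal.sum_inner_products_le (EuclideanSpace.single u (1:ℝ)) (s := T)
    simpa [EuclideanSpace.inner_single_right, EuclideanSpace.norm_single, sq_abs,
      RCLike.inner_apply, starRingEnd_apply, ha, hx] using hb
  have hxsum : ∑ u, x u = T.card := by
    rw [hx]
    rw [Finset.sum_comm]
    have : ∀ i ∈ T, ∑ u, (a i u)^2 = 1 := by
      intro i _
      have := horth i i
      simpa [sq] using this
    rw [Finset.sum_congr rfl this]
    simp
  refine ⟨x, hx0, hx1, hxsum, ?_⟩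
  set A : V → V → ℝ := fun u v => if G.Adj u v then 1 else 0 with hA
  -- sum of A = 2m
  have h2m : ∑ u, ∑ v, A u v = 2 * (numEdges G : ℝ) := by
    have h1 : ∀ u, ∑ v, A u v = (G.degree u : ℝ) := by
      intro u
      rw [hA]
      rw [Finset.sum_boole]
      rw [SimpleGraph.degree, SimpleGraph.neighborFinset_eq_filter]
    rw [Finset.sum_congr rfl fun u _ => h1 u]
    rw [← Nat.cast_sum]
    rw [G.sum_degrees_eq_twice_card_edges]
    rw [numEdges_eq]
    push_cast
    ring
  -- sum of c^2 = k
  have e1 : ∀ u v, (c u v)^2 = ∑ i ∈ T, ∑ j ∈ T, (a i u * a j u) * (a i v * a j v) := by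
    intro u v
    rw [sq, hc, Finset.sum_mul_sum]
    exact Finset.sum_congr rfl fun i _ => Finset.sum_congr rfl fun j _ => by ring
  have hcsq : ∑ u, ∑ v, (c u v)^2 = (T.card : ℝ) := by
    calc ∑ u, ∑ v, (c u v)^2
        = ∑ u, ∑ v, ∑ i ∈ T, ∑ j ∈ T, (a i u * a j u) * (a i v * a j v) :=
          Finset.sum_congr rfl fun u _ => Finset.sum_congr rfl fun v _ => e1 u v
      _ = ∑ u, ∑ i ∈ T, ∑ j ∈ T, (a i u * a j u) * ∑ v, (a i v * a j v) := by
          refine Finset.sum_congr rfl fun u _ => ?_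
          rw [Finset.sum_comm]
          refine Finset.sum_congr rfl fun i _ => ?_
          rw [Finset.sum_comm]
          refine Finset.sum_congr rfl fun j _ => ?_
          rw [← Finset.mul_sum]
      _ = ∑ i ∈ T, ∑ j ∈ T, (∑ u, a i u * a j u) * (∑ v, a i v * a j v) := by
          rw [Finset.sum_comm]
          refine Finset.sum_congr rfl fun i _ => ?_
          rw [Finset.sum_comm]
          refine Finset.sum_congr rfl fun j _ => ?_
          rw [Finset.sum_mul]
      _ = ∑ i ∈ T, ∑ j ∈ T, ((if i = j then (1:ℝ) else 0) * (if i = j then (1:ℝ) else 0)) := by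
          exact Finset.sum_congr rfl fun i _ => Finset.sum_congr rfl fun j _ => by
            rw [horth]
      _ = (T.card : ℝ) := by
          have : ∀ i ∈ T, ∑ j ∈ T, ((if i = j then (1:ℝ) else 0) * (if i = j then (1:ℝ) else 0))
              = 1 := by
            intro i hi
            rw [Finset.sum_eq_single i]
            · simp
            · intro j _ hji; simp [Ne.symm hji]
            · intro h; exact absurd hi h
          rw [Finset.sum_congr rfl this]
          simp
  -- Cauchy-Schwarz bound
  set SAC := ∑ u, ∑ v, A u v * |c u v| with hSAC
  have hSACnn : 0 ≤ SAC :=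
    Finset.sum_nonneg fun u _ => Finset.sum_nonneg fun v _ =>
      mul_nonneg (by rw [hA]; positivity) (abs_nonneg _)
  have hCS : SAC ^ 2 ≤ (2 * (numEdges G : ℝ)) * T.card := by
    have h1 := Finset.sum_mul_sq_le_sq_mul_sq Finset.univ
      (fun p : V × V => A p.1 p.2) (fun p : V × V => |c p.1 p.2|)
    have h2 : ∑ p : V × V, A p.1 p.2 * |c p.1 p.2| = SAC :=
      Fintype.sum_prod_type _
    have h3 : ∑ p : V × V, (A p.1 p.2) ^ 2 = 2 * (numEdges G : ℝ) := by
      rw [← h2m]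
      have hp : ∑ p : V × V, (A p.1 p.2) ^ 2 = ∑ u, ∑ v, (A u v) ^ 2 :=
        Fintype.sum_prod_type _
      rw [hp]
      refine Finset.sum_congr rfl fun u _ => Finset.sum_congr rfl fun v _ => ?_
      rw [hA]
      by_cases h : G.Adj u v <;> simp [h]
    have h4 : ∑ p : V × V, (|c p.1 p.2|) ^ 2 = (T.card : ℝ) := by
      rw [← hcsq]
      have hp : ∑ p : V × V, (|c p.1 p.2|) ^ 2 = ∑ u, ∑ v, (|c u v|) ^ 2 :=
        Fintype.sum_prod_type _
      rw [hp]
      exact Finset.sum_congr rfl fun u _ => Finset.sum_congr rfl fun v _ => sq_abs _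
    rw [h2, h3, h4] at h1
    exact h1
  have hSACle : SAC ≤ Real.sqrt (2 * (numEdges G : ℝ) * T.card) := by
    have := Real.sqrt_le_sqrt hCS
    rwa [Real.sqrt_sq hSACnn] at this
  -- final computation
  have hlap : lapEig G = hL.eigenvalues := lapEig_eq G
  have hsumT : ∑ i ∈ T, lapEig G i
      = ∑ u, (G.degree u : ℝ) * x u - ∑ u, ∑ v, A u v * c u v := by
    rw [hlap]
    rw [Finset.sum_congr rfl fun i (_ : i ∈ T) => hval i, Finset.sum_sub_distrib]
    congr 1
    · rw [Finset.sum_comm]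
      exact Finset.sum_congr rfl fun u _ => by rw [hx, Finset.mul_sum]
    · rw [Finset.sum_comm]
      refine Finset.sum_congr rfl fun u _ => ?_
      rw [Finset.sum_comm]
      refine Finset.sum_congr rfl fun v _ => ?_
      rw [hc, hA, Finset.mul_sum]
  have hneg : -(∑ u, ∑ v, A u v * c u v) ≤ SAC := by
    rw [hSAC]
    rw [← Finset.sum_neg_distrib]
    refine Finset.sum_le_sum fun u _ => ?_
    rw [← Finset.sum_neg_distrib]
    refine Finset.sum_le_sum fun v _ => ?_
    have hAnn : (0:ℝ) ≤ A u v := by rw [hA]; positivity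
    calc -(A u v * c u v) = A u v * (-(c u v)) := by ring
      _ ≤ A u v * |c u v| := mul_le_mul_of_nonneg_left (neg_le_abs _) hAnn
  rw [hsumT]
  have : 2 * (numEdges G : ℝ) * T.card = 2 * (numEdges G) * T.card := by push_cast; ring
  linarith [hSACle]

lemma caseB (G : SimpleGraph V) (k : ℕ) (hk : 1 ≤ k)
    (h : Real.sqrt (2 * (numEdges G : ℝ) * k) ≤ (splittance G : ℝ)) : BC G k := by
  classical
  unfold BC sLap sumKLargest
  refine Real.sSup_le ?_ (by positivity)
  rintro y ⟨T, hT, rfl⟩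
  subst hT
  obtain ⟨x, hx0, hx1, hxsum, hineq⟩ := spec_core G T
  have hTpos : T.Nonempty := Finset.card_pos.1 hk
  have hkn : T.card ≤ Fintype.card V := by simpa using Finset.card_le_univ T
  obtain ⟨S, hScard, hSmax⟩ := exists_topk (fun u => (G.degree u : ℝ)) hkn
  have hSne : S.Nonempty := Finset.card_pos.1 (hScard ▸ hk)
  have htop : ∑ u, (G.degree u : ℝ) * x u ≤ ∑ u ∈ S, (G.degree u : ℝ) :=
    sum_mul_le_topk hSne hx0 hx1 (by rw [hScard]; exact hxsum) hSmax
  have hsplit := splittance_bound G S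
  have hsplitR : (splittance G : ℝ) + ∑ u ∈ S, (G.degree u : ℝ)
      ≤ (S.card.choose 2 : ℝ) + (numEdges G : ℝ) := by
    have : ((splittance G + ∑ u ∈ S, G.degree u : ℕ) : ℝ)
        ≤ ((S.card.choose 2 + numEdges G : ℕ) : ℝ) := Nat.cast_le.2 hsplit
    push_cast at this
    linarith
  have hchoose : ((S.card.choose 2 : ℕ) : ℝ) ≤ (((T.card + 1).choose 2 : ℕ) : ℝ) := by
    have : S.card.choose 2 ≤ (T.card + 1).choose 2 :=
      Nat.choose_le_choose 2 (by omega)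
    exact_mod_cast this
  linarith
set_option maxHeartbeats 1000000 in
lemma caseA (G : SimpleGraph V) (k : ℕ) (hk : 1 ≤ k)
    (h : 2 * Fintype.card V * k ≤ numEdges G) : BC G k := by
  classical
  unfold BC sLap sumKLargest
  refine Real.sSup_le ?_ (by positivity)
  rintro y ⟨T, hT, rfl⟩
  subst hT
  obtain ⟨x, hx0, hx1, hxsum, hineq⟩ := spec_core G T
  have hTpos : T.Nonempty := Finset.card_pos.1 hk
  have hne : Nonempty V := ⟨hTpos.choose⟩
  have hn1 : 1 ≤ Fintype.card V := Fintype.card_pos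
  have hmn : numEdges G ≤ (Fintype.card V).choose 2 := by
    rw [numEdges_eq]
    exact SimpleGraph.card_edgeFinset_le_card_choose_two
  have hn5 : 5 ≤ Fintype.card V := by
    set n := Fintype.card V
    have h1 : 2 * n ≤ numEdges G := le_trans (by nlinarith) h
    have h2 : n.choose 2 = n * (n - 1) / 2 := Nat.choose_two_right n
    have h3 : n * (n - 1) / 2 * 2 ≤ n * (n - 1) := Nat.div_mul_le_self _ 2
    have h4 : 4 * n ≤ n * (n - 1) := by omega
    rcases Nat.lt_or_ge n 5 with h5 | h5
    · interval_cases n <;> omega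
    · exact h5
  have hdeg : ∀ u, (G.degree u : ℝ) ≤ (Fintype.card V : ℝ) := fun u =>
    Nat.cast_le.2 (le_of_lt (G.degree_lt_card_verts u))
  have hdx : ∑ u, (G.degree u : ℝ) * x u ≤ (Fintype.card V : ℝ) * T.card := by
    calc ∑ u, (G.degree u : ℝ) * x u ≤ ∑ u, (Fintype.card V : ℝ) * x u :=
          Finset.sum_le_sum fun u _ => mul_le_mul_of_nonneg_right (hdeg u) (hx0 u)
      _ = (Fintype.card V : ℝ) * T.card := by rw [← Finset.mul_sum, hxsum]
  have hmR : (2 : ℝ) * (Fintype.card V : ℝ) * (T.card : ℝ) ≤ (numEdges G : ℝ) := by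
    exact_mod_cast h
  have hk1R : (1 : ℝ) ≤ (T.card : ℝ) := by exact_mod_cast hk
  have hn5R : (5 : ℝ) ≤ (Fintype.card V : ℝ) := by exact_mod_cast hn5
  have h8 : (8 : ℝ) * (T.card : ℝ) ≤ (numEdges G : ℝ) := by nlinarith
  have hm0 : (0 : ℝ) ≤ (numEdges G : ℝ) := Nat.cast_nonneg _
  have hsq : Real.sqrt (2 * (numEdges G : ℝ) * T.card) ≤ (numEdges G : ℝ) / 2 := by
    have h1 : 2 * (numEdges G : ℝ) * T.card ≤ ((numEdges G : ℝ) / 2) ^ 2 := by nlinarith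
    calc Real.sqrt (2 * (numEdges G : ℝ) * T.card)
        ≤ Real.sqrt (((numEdges G : ℝ) / 2) ^ 2) := Real.sqrt_le_sqrt h1
      _ = (numEdges G : ℝ) / 2 := Real.sqrt_sq (by linarith)
  have hcast : Real.sqrt (2 * ((numEdges G : ℕ) : ℝ) * ((T.card : ℕ) : ℝ))
      = Real.sqrt (2 * (numEdges G : ℝ) * T.card) := rfl
  have hch0 : (0 : ℝ) ≤ (((T.card + 1).choose 2 : ℕ) : ℝ) := Nat.cast_nonneg _
  nlinarith [hineq, hdx, hsq, hmR]

end AuxProofs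

/-- `BC_k(G)` holds for `1 ≤ k ≤ σ(G)/√(8n)`; in particular, if
`σ(G) ≥ √2 · n^{3/2}` then `BC_k(G)` holds for every `1 ≤ k ≤ n`. -/
theorem bc_of_splittance {V : Type*} [Fintype V] [DecidableEq V] (G : SimpleGraph V) :
    (∀ k : ℕ, 1 ≤ k →
      (k : ℝ) ≤ (splittance G : ℝ) / Real.sqrt (8 * Fintype.card V) → BC G k) ∧
    (Real.sqrt 2 * (Fintype.card V : ℝ) ^ ((3 : ℝ) / 2) ≤ (splittance G : ℝ) →
      ∀ k : ℕ, 1 ≤ k → k ≤ Fintype.card V → BC G k) := by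
  classical
  constructor
  · intro k hk1 hk2
    rcases Nat.eq_zero_or_pos (Fintype.card V) with hn | hn
    · exfalso
      rw [hn] at hk2
      simp at hk2
      have : (1 : ℝ) ≤ (k : ℝ) := by exact_mod_cast hk1
      linarith
    have hnR : (1 : ℝ) ≤ (Fintype.card V : ℝ) := by exact_mod_cast hn
    have hsqrtpos : 0 < Real.sqrt (8 * (Fintype.card V : ℝ)) :=
      Real.sqrt_pos.2 (by linarith)
    have hσ : (k : ℝ) * Real.sqrt (8 * (Fintype.card V : ℝ)) ≤ (splittance G : ℝ) :=
      (le_div_iff₀ hsqrtpos).1 hk2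
    rcases le_or_gt (numEdges G) (2 * Fintype.card V * k) with hm | hm
    · apply caseB G k hk1
      have hk0 : (0 : ℝ) ≤ (k : ℝ) := Nat.cast_nonneg _
      have h1 : 2 * (numEdges G : ℝ) * k ≤ 8 * (Fintype.card V : ℝ) * (k : ℝ) ^ 2 := by
        have hmR : (numEdges G : ℝ) ≤ 2 * (Fintype.card V : ℝ) * k := by exact_mod_cast hm
        nlinarith
      calc Real.sqrt (2 * (numEdges G : ℝ) * k)
          ≤ Real.sqrt (8 * (Fintype.card V : ℝ) * (k : ℝ) ^ 2) := Real.sqrt_le_sqrt h1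
        _ = Real.sqrt (8 * (Fintype.card V : ℝ)) * (k : ℝ) := by
            rw [Real.sqrt_mul (by linarith) ((k : ℝ) ^ 2), Real.sqrt_sq hk0]
        _ ≤ (splittance G : ℝ) := by linarith [hσ]
    · exact caseA G k hk1 (le_of_lt hm)
  · intro hσ k hk1 hkn
    apply caseB G k hk1
    have hn1 : 1 ≤ Fintype.card V := le_trans hk1 hkn
    have hnR : (0 : ℝ) ≤ (Fintype.card V : ℝ) := Nat.cast_nonneg _
    have hm2 : 2 * numEdges G ≤ Fintype.card V * Fintype.card V := by
      have h1 : numEdges G ≤ (Fintype.card V).choose 2 := by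
        classical
        rw [numEdges_eq]
        exact SimpleGraph.card_edgeFinset_le_card_choose_two
      have h2 : (Fintype.card V).choose 2 = Fintype.card V * (Fintype.card V - 1) / 2 :=
        Nat.choose_two_right _
      have h3 : Fintype.card V * (Fintype.card V - 1) / 2 * 2
          ≤ Fintype.card V * (Fintype.card V - 1) := Nat.div_mul_le_self _ 2
      have h4 : Fintype.card V * (Fintype.card V - 1) ≤ Fintype.card V * Fintype.card V :=
        Nat.mul_le_mul_left _ (by omega)
      omega
    have h1 : 2 * (numEdges G : ℝ) * k ≤ (Fintype.card V : ℝ) ^ 3 := by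
      have hA : (2 * numEdges G * k : ℕ) ≤ (Fintype.card V * Fintype.card V * Fintype.card V : ℕ) := by
        calc 2 * numEdges G * k ≤ Fintype.card V * Fintype.card V * k :=
              Nat.mul_le_mul_right _ hm2
          _ ≤ Fintype.card V * Fintype.card V * Fintype.card V :=
              Nat.mul_le_mul_left _ hkn
      have := (Nat.cast_le (α := ℝ)).2 hA
      push_cast at this
      nlinarith [this]
    have h2 : Real.sqrt ((Fintype.card V : ℝ) ^ 3) = (Fintype.card V : ℝ) ^ ((3 : ℝ) / 2) := by
      rw [Real.sqrt_eq_rpow, ← Real.rpow_natCast (Fintype.card V : ℝ) 3,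
        ← Real.rpow_mul hnR]
      norm_num
    calc Real.sqrt (2 * (numEdges G : ℝ) * k)
        ≤ Real.sqrt ((Fintype.card V : ℝ) ^ 3) := Real.sqrt_le_sqrt h1
      _ = (Fintype.card V : ℝ) ^ ((3 : ℝ) / 2) := h2
      _ ≤ Real.sqrt 2 * (Fintype.card V : ℝ) ^ ((3 : ℝ) / 2) := by
          have hs : (1 : ℝ) ≤ Real.sqrt 2 := by
            rw [show (1 : ℝ) = Real.sqrt 1 from (Real.sqrt_one).symm]
            exact Real.sqrt_le_sqrt (by norm_num)
          have hp : (0 : ℝ) ≤ (Fintype.card V : ℝ) ^ ((3 : ℝ) / 2) :=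
            Real.rpow_nonneg hnR _
          nlinarith
      _ ≤ (splittance G : ℝ) := hσ

end Brouwer
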